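/- Let M be an invertible (k+1)×(k+1) real matrix whose column sums all equal 1, let J be the (k+1)×k matrix with first row −𝟙 and remaining rows I_k, and let Ξ be the k×k matrix with entries Ξ_{i,j} = M_{i+1,j+1} − M_{i+1,1}. Then Ξ is invertible. -/
import Mathlib


open Matrix

/-- If `M` is an invertible `(k+1) × (k+1)` real matrix with column sums all 1, then
the `k × k` contrast matrix `Ξ i j = M (i+1) (j+1) - M (i+1) 0` is invertible. -/
theorem contrast_matrix_invertible {k : ℕ} (M : Matrix (Fin (k+1)) (Fin (k+1)) ℝ)
    (hM : IsUnit M.det)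
    (hMcol : ∀ j, ∑ i, M i j = 1)
    (J : Matrix (Fin (k+1)) (Fin k) ℝ)
    (hJ : ∀ i j, J i j = if i = j.succ then 1 else if i = 0 then -1 else 0)
    (Ξ : Matrix (Fin k) (Fin k) ℝ)
    (hΞ : ∀ i j, Ξ i j = M i.succ j.succ - M i.succ 0) :
    IsUnit Ξ.det := by
  classical
  have key : M * J = J * Ξ := by
    ext i j
    rw [Matrix.mul_apply, Matrix.mul_apply]
    have hMJ : ∑ l, M i l * J l j = M i j.succ - M i 0 := by
      have h : ∀ l, M i l * J l j =
          (if l = j.succ then M i l else 0) - (if l = (0 : Fin (k+1)) then M i l else 0) := by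
        intro l
        rw [hJ]
        by_cases h1 : l = j.succ
        · subst h1; simp [Fin.succ_ne_zero]
        · by_cases h2 : l = 0 <;> simp [h1, h2, (Fin.succ_ne_zero j).symm]
      rw [Finset.sum_congr rfl (fun l _ => h l), Finset.sum_sub_distrib]
      simp
    rw [hMJ]
    induction i using Fin.cases with
    | zero =>
      have h : ∀ l, J 0 l * Ξ l j = -(M l.succ j.succ - M l.succ 0) := by
        intro l
        rw [hJ, hΞ]
        simp [(Fin.succ_ne_zero l).symm]
      rw [Finset.sum_congr rfl (fun l _ => h l)]
      have h1 := hMcol j.succ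
      have h2 := hMcol 0
      rw [Fin.sum_univ_succ] at h1 h2
      have hs : ∑ l : Fin k, -(M l.succ j.succ - M l.succ 0)
          = -(∑ l : Fin k, M l.succ j.succ) + ∑ l : Fin k, M l.succ 0 := by
        rw [Finset.sum_neg_distrib, Finset.sum_sub_distrib]; ring
      rw [hs]
      linarith
    | succ m =>
      have h : ∀ l, J m.succ l * Ξ l j = if l = m then Ξ l j else 0 := by
        intro l
        rw [hJ]
        by_cases h1 : l = m
        · subst h1; simp
        · have : (m.succ : Fin (k+1)) ≠ l.succ := fun hc => h1 (Fin.succ_injective _ hc).symm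
          simp [this, h1, Fin.succ_ne_zero m]
      rw [Finset.sum_congr rfl (fun l _ => h l), Finset.sum_ite_eq' Finset.univ m]
      simp [hΞ]
  by_contra hΞdet
  have hdet0 : Ξ.det = 0 := by
    rwa [isUnit_iff_ne_zero, not_not] at hΞdet
  obtain ⟨v, hv, hΞv⟩ := (Matrix.exists_mulVec_eq_zero_iff).mpr hdet0
  have hw : M.mulVec (J.mulVec v) = 0 := by
    rw [Matrix.mulVec_mulVec, key, ← Matrix.mulVec_mulVec, hΞv, Matrix.mulVec_zero]
  have hJv : J.mulVec v = 0 := by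
    by_contra hJv
    exact hM.ne_zero (Matrix.exists_mulVec_eq_zero_iff.mp ⟨J.mulVec v, hJv, hw⟩)
  apply hv
  funext m
  have := congrFun hJv m.succ
  simp only [Matrix.mulVec, dotProduct, Pi.zero_apply] at this
  have hsum : ∑ l, J m.succ l * v l = v m := by
    have h : ∀ l, J m.succ l * v l = if l = m then v l else 0 := by
      intro l
      rw [hJ]
      by_cases h1 : l = m
      · subst h1; simp
      · have : (m.succ : Fin (k+1)) ≠ l.succ := fun hc => h1 (Fin.succ_injective _ hc).symm
        simp [this, h1, Fin.succ_ne_zero m]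
    rw [Finset.sum_congr rfl (fun l _ => h l), Finset.sum_ite_eq' Finset.univ m]
    simp
  rw [hsum] at this
  simp [this]
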